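/- Let K ≥ 1, let w₁, …, w_K be positive weights, and let θ ∈ ℝ^K. Then the min–max values preserve the weighted mean: Σ_{j=1}^{K} w_j θ*_j = Σ_{j=1}^{K} w_j θ_j, where θ*_j = min_{j ≤ t ≤ K} max_{1 ≤ s ≤ j} Av(θ, s, t). -/

import Mathlib

/-- The weighted average Av(θ, u, v) = (Σ_{j=u}^{v} w_j θ_j)/(Σ_{j=u}^{v} w_j). -/
noncomputable def Av {K : ℕ} (w θ : Fin K → ℝ) (u v : Fin K) : ℝ :=
  (∑ j ∈ Finset.Icc u v, w j * θ j) / ∑ j ∈ Finset.Icc u v, w j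

/-- The min–max (isotonic regression) values θ*_j = min_{j ≤ t ≤ K} max_{1 ≤ s ≤ j} Av(θ, s, t). -/
noncomputable def thetaStar {K : ℕ} (w θ : Fin K → ℝ) (j : Fin K) : ℝ :=
  Finset.inf' (Finset.Ici j) ⟨j, by simp⟩ fun t =>
    Finset.sup' (Finset.Iic j) ⟨j, by simp⟩ fun s => Av w θ s t


noncomputable def AvN (w θ : ℕ → ℝ) (u v : ℕ) : ℝ :=
  (∑ j ∈ Finset.Icc u v, w j * θ j) / ∑ j ∈ Finset.Icc u v, w j

noncomputable def tN (w θ : ℕ → ℝ) (K a j : ℕ) : ℝ :=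
  if h : a ≤ j ∧ j ≤ K - 1 then
    Finset.inf' (Finset.Icc j (K-1)) ⟨j, by simp [h.2]⟩ fun t =>
      Finset.sup' (Finset.Icc a j) ⟨j, by simp [h.1]⟩ fun s => AvN w θ s t
  else 0

lemma sum_Icc_split (f : ℕ → ℝ) {u m v : ℕ} (h1 : u ≤ m + 1) (h2 : m ≤ v) :
    ∑ j ∈ Finset.Icc u v, f j
      = ∑ j ∈ Finset.Icc u m, f j + ∑ j ∈ Finset.Icc (m+1) v, f j := by
  rw [← Finset.Ico_add_one_right_eq_Icc, ← Finset.Ico_add_one_right_eq_Icc, ← Finset.Ico_add_one_right_eq_Icc,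
    Finset.sum_Ico_consecutive f h1 (Nat.add_le_add_right h2 1 : m + 1 ≤ v + 1)]

lemma sw_pos (w : ℕ → ℝ) (hw : ∀ j, 0 < w j) {u v : ℕ} (h : u ≤ v) :
    0 < ∑ j ∈ Finset.Icc u v, w j :=
  Finset.sum_pos (fun j _ => hw j) ⟨u, by simp [h]⟩

lemma av_right_le (w θ : ℕ → ℝ) (hw : ∀ j, 0 < w j) {u m v : ℕ} {c : ℝ}
    (h1 : u ≤ m) (h2 : m < v) (hA : AvN w θ u v ≤ c) (hB : c ≤ AvN w θ u m) :
    AvN w θ (m+1) v ≤ c := by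
  have p1 := sw_pos w hw h1
  have p2 : 0 < ∑ j ∈ Finset.Icc (m+1) v, w j := sw_pos w hw h2
  have pv := sw_pos w hw (le_trans h1 (le_of_lt h2))
  have e1 := sum_Icc_split (fun j => w j * θ j) (Nat.le_succ_of_le h1) (le_of_lt h2)
  have e2 := sum_Icc_split w (Nat.le_succ_of_le h1) (le_of_lt h2)
  unfold AvN at *
  rw [div_le_iff₀ pv] at hA
  rw [le_div_iff₀ p1] at hB
  rw [div_le_iff₀ p2]
  rw [e1, e2] at hA
  linarith

lemma av_right_ge (w θ : ℕ → ℝ) (hw : ∀ j, 0 < w j) {u m v : ℕ} {c : ℝ}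
    (h1 : u ≤ m) (h2 : m < v) (hA : c ≤ AvN w θ u v) (hB : AvN w θ u m ≤ c) :
    c ≤ AvN w θ (m+1) v := by
  have p1 := sw_pos w hw h1
  have p2 : 0 < ∑ j ∈ Finset.Icc (m+1) v, w j := sw_pos w hw h2
  have pv := sw_pos w hw (le_trans h1 (le_of_lt h2))
  have e1 := sum_Icc_split (fun j => w j * θ j) (Nat.le_succ_of_le h1) (le_of_lt h2)
  have e2 := sum_Icc_split w (Nat.le_succ_of_le h1) (le_of_lt h2)
  unfold AvN at *
  rw [le_div_iff₀ pv] at hA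
  rw [div_le_iff₀ p1] at hB
  rw [le_div_iff₀ p2]
  rw [e1, e2] at hA
  linarith

lemma av_mid_le (w θ : ℕ → ℝ) (hw : ∀ j, 0 < w j) {u m v : ℕ} {c : ℝ}
    (h1 : u ≤ m) (h2 : m < v) (hA : AvN w θ u m ≤ c) (hB : AvN w θ (m+1) v ≤ c) :
    AvN w θ u v ≤ c := by
  have p1 := sw_pos w hw h1
  have p2 : 0 < ∑ j ∈ Finset.Icc (m+1) v, w j := sw_pos w hw h2
  have pv := sw_pos w hw (le_trans h1 (le_of_lt h2))
  have e1 := sum_Icc_split (fun j => w j * θ j) (Nat.le_succ_of_le h1) (le_of_lt h2)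
  have e2 := sum_Icc_split w (Nat.le_succ_of_le h1) (le_of_lt h2)
  unfold AvN at *
  rw [div_le_iff₀ p1] at hA
  rw [div_le_iff₀ p2] at hB
  rw [div_le_iff₀ pv]
  rw [e1, e2]
  linarith
lemma keyN (w θ : ℕ → ℝ) (K : ℕ) (hw : ∀ j, 0 < w j) (hK : 1 ≤ K) :
    ∀ n a, K - a ≤ n → a ≤ K - 1 →
    ∑ j ∈ Finset.Icc a (K-1), w j * tN w θ K a j
      = ∑ j ∈ Finset.Icc a (K-1), w j * θ j := by
  intro n
  induction n with
  | zero => intro a hn ha; exfalso; omega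
  | succ n ih =>
    intro a hn ha
    have hne : (Finset.Icc a (K-1)).Nonempty := ⟨a, by simp [ha]⟩
    set μ := Finset.inf' (Finset.Icc a (K-1)) hne (fun t => AvN w θ a t) with hμdef
    obtain ⟨t₀, ht₀mem, ht₀⟩ := Finset.exists_mem_eq_inf' hne (fun t => AvN w θ a t)
    rw [Finset.mem_Icc] at ht₀mem
    obtain ⟨hat₀, ht₀L⟩ := ht₀mem
    have hμle : ∀ t, a ≤ t → t ≤ K-1 → μ ≤ AvN w θ a t := fun t h1 h2 =>
      Finset.inf'_le _ (Finset.mem_Icc.2 ⟨h1, h2⟩)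
    have hμeq : AvN w θ a t₀ = μ := ht₀.symm
    have AvLow : ∀ s, a ≤ s → s ≤ t₀ → AvN w θ s t₀ ≤ μ := by
      intro s h1 h2
      rcases Nat.eq_or_lt_of_le h1 with rfl | hlt
      · exact le_of_eq hμeq
      · have hs : s - 1 + 1 = s := by omega
        have := av_right_le w θ hw (u := a) (m := s-1) (v := t₀) (by omega) (by omega)
          (le_of_eq hμeq) (hμle (s-1) (by omega) (by omega))
        rwa [hs] at this
    have tailHigh : ∀ t, t₀ < t → t ≤ K-1 → μ ≤ AvN w θ (t₀+1) t := fun t h1 h2 =>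
      av_right_ge w θ hw hat₀ h1 (hμle t (by omega) h2) (le_of_eq hμeq)
    have ClaimA : ∀ j, a ≤ j → j ≤ t₀ → tN w θ K a j = μ := by
      intro j h1 h2
      rw [tN, dif_pos ⟨h1, le_trans h2 ht₀L⟩]
      apply le_antisymm
      · refine le_trans (Finset.inf'_le _ (Finset.mem_Icc.2 ⟨h2, ht₀L⟩)) ?_
        apply Finset.sup'_le
        intro s hs
        rw [Finset.mem_Icc] at hs
        exact AvLow s hs.1 (le_trans hs.2 h2)
      · apply Finset.le_inf'
        intro t ht
        rw [Finset.mem_Icc] at ht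
        exact le_trans (hμle t (le_trans h1 ht.1) ht.2)
          (Finset.le_sup' (fun s => AvN w θ s t) (Finset.mem_Icc.2 ⟨le_refl a, h1⟩))
    have swpos := sw_pos w hw hat₀
    have block : ∑ j ∈ Finset.Icc a t₀, w j * μ = ∑ j ∈ Finset.Icc a t₀, w j * θ j := by
      rw [← Finset.sum_mul, ← hμeq]
      unfold AvN
      rw [mul_comm, div_mul_cancel₀ _ (ne_of_gt swpos)]
    rcases eq_or_lt_of_le ht₀L with hEq | hlt
    · have hc : ∀ j ∈ Finset.Icc a (K-1), w j * tN w θ K a j = w j * μ := fun j hj => by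
        rw [Finset.mem_Icc] at hj; rw [ClaimA j hj.1 (hEq ▸ hj.2)]
      rw [← hEq] at hc ⊢
      exact (Finset.sum_congr rfl hc).trans block
    · have ClaimB : ∀ j, t₀ < j → j ≤ K-1 → tN w θ K a j = tN w θ K (t₀+1) j := by
        intro j h1 h2
        rw [tN, dif_pos ⟨by omega, h2⟩, tN, dif_pos ⟨h1, h2⟩]
        apply Finset.inf'_congr _ rfl
        intro t ht
        rw [Finset.mem_Icc] at ht
        apply le_antisymm
        · apply Finset.sup'_le
          intro s hs
          rw [Finset.mem_Icc] at hs
          rcases le_or_gt s t₀ with hst | hst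
          · refine le_trans ?_
              (Finset.le_sup' (fun s => AvN w θ s t) (Finset.mem_Icc.2 ⟨le_refl _, h1⟩))
            exact av_mid_le w θ hw hst (by omega)
              (le_trans (AvLow s hs.1 hst) (tailHigh t (by omega) ht.2)) (le_refl _)
          · exact Finset.le_sup' (fun s => AvN w θ s t) (Finset.mem_Icc.2 ⟨by omega, hs.2⟩)
        · apply Finset.sup'_le
          intro s hs
          rw [Finset.mem_Icc] at hs
          exact Finset.le_sup' (fun s => AvN w θ s t) (Finset.mem_Icc.2 ⟨by omega, hs.2⟩)
      have split1 := sum_Icc_split (fun j => w j * tN w θ K a j) (Nat.le_succ_of_le hat₀) ht₀L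
      have split2 := sum_Icc_split (fun j => w j * θ j) (Nat.le_succ_of_le hat₀) ht₀L
      rw [split1, split2]
      have h1 : ∑ j ∈ Finset.Icc a t₀, w j * tN w θ K a j
          = ∑ j ∈ Finset.Icc a t₀, w j * θ j := by
        have e : ∑ j ∈ Finset.Icc a t₀, w j * tN w θ K a j
            = ∑ j ∈ Finset.Icc a t₀, w j * μ :=
          Finset.sum_congr rfl fun j hj => by
            rw [Finset.mem_Icc] at hj
            rw [ClaimA j hj.1 hj.2]
        exact e.trans block
      have h2 : ∑ j ∈ Finset.Icc (t₀+1) (K-1), w j * tN w θ K a j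
          = ∑ j ∈ Finset.Icc (t₀+1) (K-1), w j * θ j := by
        have e : ∑ j ∈ Finset.Icc (t₀+1) (K-1), w j * tN w θ K a j
            = ∑ j ∈ Finset.Icc (t₀+1) (K-1), w j * tN w θ K (t₀+1) j :=
          Finset.sum_congr rfl fun j hj => by
            rw [Finset.mem_Icc] at hj
            rw [ClaimB j (by omega) hj.2]
        exact e.trans (ih (t₀+1) (by omega) hlt)
      rw [h1, h2]

/-- Let K ≥ 1, w positive weights, θ ∈ ℝ^K. Then the min–max values preserve
the weighted mean: Σ_j w_j θ*_j = Σ_j w_j θ_j. -/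
theorem stmt9 (K : ℕ) (hK : 1 ≤ K) (w θ : Fin K → ℝ) (hw : ∀ j, 0 < w j) :
    ∑ j, w j * thetaStar w θ j = ∑ j, w j * θ j := by
  classical
  set W : ℕ → ℝ := fun n => if h : n < K then w ⟨n, h⟩ else 1 with hW
  set Θ : ℕ → ℝ := fun n => if h : n < K then θ ⟨n, h⟩ else 0 with hΘ
  have hWpos : ∀ j, 0 < W j := by
    intro j; simp only [hW]
    split
    · exact hw _
    · norm_num
  have hWe : ∀ j : Fin K, W j.val = w j := fun j => by simp [hW, j.isLt]
  have hΘe : ∀ j : Fin K, Θ j.val = θ j := fun j => by simp [hΘ, j.isLt]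
  have hAv : ∀ u v : Fin K, Av w θ u v = AvN W Θ u.val v.val := by
    intro u v
    unfold Av AvN
    rw [← Fin.map_valEmbedding_Icc, Finset.sum_map, Finset.sum_map]
    congr 1
    · exact Finset.sum_congr rfl fun j _ => by
        simp only [Fin.valEmbedding_apply]; rw [hWe j, hΘe j]
    · exact Finset.sum_congr rfl fun j _ => by
        simp only [Fin.valEmbedding_apply]; rw [hWe j]
  have hts : ∀ j : Fin K, thetaStar w θ j = tN W Θ K 0 j.val := by
    intro j
    have hjK := j.isLt
    have hjL : j.val ≤ K - 1 := by omega
    rw [tN, dif_pos ⟨Nat.zero_le _, hjL⟩]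
    unfold thetaStar
    have hsup : ∀ t : Fin K,
        Finset.sup' (Finset.Icc 0 j.val) ⟨j.val, by simp⟩ (fun s => AvN W Θ s t.val)
          = Finset.sup' (Finset.Iic j) ⟨j, by simp⟩ (fun s => Av w θ s t) := by
      intro t
      apply le_antisymm
      · apply Finset.sup'_le
        intro n hn
        rw [Finset.mem_Icc] at hn
        have hnK : n < K := by omega
        have : AvN W Θ n t.val = Av w θ ⟨n, hnK⟩ t := (hAv ⟨n, hnK⟩ t).symm
        rw [this]
        exact Finset.le_sup' (fun s => Av w θ s t)
          (Finset.mem_Iic.2 (by rw [Fin.le_def]; exact hn.2))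
      · apply Finset.sup'_le
        intro s hs
        rw [Finset.mem_Iic, Fin.le_def] at hs
        rw [hAv s t]
        exact Finset.le_sup' (fun n => AvN W Θ n t.val)
          (Finset.mem_Icc.2 ⟨Nat.zero_le _, hs⟩)
    apply le_antisymm
    · apply Finset.le_inf'
      intro n hn
      rw [Finset.mem_Icc] at hn
      have hnK : n < K := by omega
      have hmem : (⟨n, hnK⟩ : Fin K) ∈ Finset.Ici j :=
        Finset.mem_Ici.2 (by rw [Fin.le_def]; exact hn.1)
      exact le_trans (Finset.inf'_le _ hmem) (hsup ⟨n, hnK⟩).ge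
    · apply Finset.le_inf'
      intro t ht
      rw [Finset.mem_Ici] at ht
      have hmem : t.val ∈ Finset.Icc (j.val) (K-1) := Finset.mem_Icc.2 ⟨ht, by omega⟩
      exact le_trans (Finset.inf'_le _ hmem) (hsup t).le
  have hrange : Finset.range K = Finset.Icc 0 (K-1) := by
    ext x; simp only [Finset.mem_range, Finset.mem_Icc]; omega
  have L1 : ∑ j : Fin K, w j * thetaStar w θ j
      = ∑ n ∈ Finset.Icc 0 (K-1), W n * tN W Θ K 0 n := by
    rw [← hrange, ← Fin.sum_univ_eq_sum_range (fun n => W n * tN W Θ K 0 n) K]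
    exact Finset.sum_congr rfl fun j _ => by rw [hts j, hWe j]
  have L2 : ∑ j : Fin K, w j * θ j = ∑ n ∈ Finset.Icc 0 (K-1), W n * Θ n := by
    rw [← hrange, ← Fin.sum_univ_eq_sum_range (fun n => W n * Θ n) K]
    exact Finset.sum_congr rfl fun j _ => by rw [hWe j, hΘe j]
  rw [L1, L2]
  exact keyN W Θ K hWpos hK K 0 (by omega) (Nat.zero_le _)
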